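/- If the density matrices σ_i in an ensemble {p_i, σ_i} (with all p_i > 0) pairwise commute, then there exists a POVM {N_j} (namely the projective measurement in a common eigenbasis) such that the classical mutual information of p_{ij} = p_i Tr(N_j σ_i) equals the Holevo quantity χ = S(Σ_i p_i σ_i) - Σ_i p_i S(σ_i). -/

import Mathlib

open Matrix Kronecker ComplexOrder
noncomputable section

/-- A density matrix: positive semidefinite with unit trace. -/
def IsDensity {n : Type} [Fintype n] [DecidableEq n] (ρ : Matrix n n ℂ) : Prop :=
  ρ.PosSemidef ∧ ρ.trace = 1

/-- Partial trace over the second (B) factor, yielding the reduced state on A. -/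
def ptraceB {A B : Type} [Fintype A] [Fintype B] (ρ : Matrix (A × B) (A × B) ℂ) :
    Matrix A A ℂ := fun a a' => ∑ b, ρ (a, b) (a', b)

/-- Partial trace over the first (A) factor, yielding the reduced state on B. -/
def ptraceA {A B : Type} [Fintype A] [Fintype B] (ρ : Matrix (A × B) (A × B) ℂ) :
    Matrix B B ℂ := fun b b' => ∑ a, ρ (a, b) (a, b')

/-- Von Neumann entropy, S(ρ) = -Tr ρ log ρ, via the eigenvalues (convention 0 log 0 = 0). -/
def vN {n : Type} [Fintype n] [DecidableEq n] (ρ : Matrix n n ℂ) : ℝ :=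
  if h : ρ.IsHermitian then -∑ i, h.eigenvalues i * Real.log (h.eigenvalues i) else 0

/-- Quantum mutual information I(A:B) = S(A) + S(B) - S(AB). -/
def mutualInfo {A B : Type} [Fintype A] [Fintype B] [DecidableEq A] [DecidableEq B]
    (ρ : Matrix (A × B) (A × B) ℂ) : ℝ :=
  vN (ptraceB ρ) + vN (ptraceA ρ) - vN ρ

/-- Functional calculus for Hermitian matrices via the spectral decomposition. -/
def herFun {n : Type} [Fintype n] [DecidableEq n] (f : ℝ → ℝ) (ρ : Matrix n n ℂ) :
    Matrix n n ℂ :=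
  if h : ρ.IsHermitian then
    (h.eigenvectorUnitary : Matrix n n ℂ) *
      Matrix.diagonal (fun i => (f (h.eigenvalues i) : ℂ)) *
      star (h.eigenvectorUnitary : Matrix n n ℂ)
  else 0

/-- Matrix logarithm on the support (log 0 := 0). -/
def mlog {n : Type} [Fintype n] [DecidableEq n] (ρ : Matrix n n ℂ) : Matrix n n ℂ :=
  herFun Real.log ρ

/-- Matrix square root of a Hermitian matrix. -/
def msqrt {n : Type} [Fintype n] [DecidableEq n] (ρ : Matrix n n ℂ) : Matrix n n ℂ :=
  herFun Real.sqrt ρ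

/-- Inverse square root on the support. -/
def minvsqrt {n : Type} [Fintype n] [DecidableEq n] (ρ : Matrix n n ℂ) : Matrix n n ℂ :=
  herFun (fun x => if x = 0 then 0 else 1 / Real.sqrt x) ρ

/-- Quantum relative entropy S(ρ‖σ) = Tr ρ (log ρ - log σ). -/
def relEntropy {n : Type} [Fintype n] [DecidableEq n] (ρ σ : Matrix n n ℂ) : ℝ :=
  ((ρ * (mlog ρ - mlog σ)).trace).re

/-- The support of σ contains the support of ρ (kernel inclusion). -/
def SuppLE {n : Type} [Fintype n] (ρ σ : Matrix n n ℂ) : Prop :=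
  ∀ x : n → ℂ, σ *ᵥ x = 0 → ρ *ᵥ x = 0

/-- Choi matrix of a linear map on matrices. -/
def choi {A A' : Type} [Fintype A] [Fintype A'] [DecidableEq A]
    (Φ : Matrix A A ℂ →ₗ[ℂ] Matrix A' A' ℂ) : Matrix (A × A') (A × A') ℂ :=
  fun p q => Φ (Matrix.single p.1 q.1 1) p.2 q.2

/-- A quantum channel: completely positive (positive Choi matrix) and trace preserving. -/
def IsCPTP {A A' : Type} [Fintype A] [Fintype A'] [DecidableEq A]
    (Φ : Matrix A A ℂ →ₗ[ℂ] Matrix A' A' ℂ) : Prop :=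
  (choi Φ).PosSemidef ∧ ∀ X, (Φ X).trace = X.trace

/-- Tensor product Φ ⊗ Ψ of linear maps on matrix spaces. -/
def tensorMap {A B A' B' : Type} [Fintype A] [Fintype B] [DecidableEq A] [DecidableEq B]
    (Φ : Matrix A A ℂ →ₗ[ℂ] Matrix A' A' ℂ) (Ψ : Matrix B B ℂ →ₗ[ℂ] Matrix B' B' ℂ) :
    Matrix (A × B) (A × B) ℂ →ₗ[ℂ] Matrix (A' × B') (A' × B') ℂ where
  toFun X := fun p q => ∑ i, ∑ i', ∑ j, ∑ j',
    X (i, j) (i', j') * Φ (Matrix.single i i' 1) p.1 q.1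
      * Ψ (Matrix.single j j' 1) p.2 q.2
  map_add' X Y := by
    funext p q
    show _ = (_ : ℂ) + _
    simp [Matrix.add_apply, add_mul, Finset.sum_add_distrib]
  map_smul' c X := by
    funext p q
    show _ = c * (_ : ℂ)
    simp [Matrix.smul_apply, smul_eq_mul, Finset.mul_sum, mul_assoc]

/-- Shannon entropy of a finite distribution (0 log 0 = 0). -/
def shannon {ι : Type} [Fintype ι] (p : ι → ℝ) : ℝ := -∑ i, p i * Real.log (p i)

/-- Classical mutual information of a joint distribution. -/
def cMI {ι κ : Type} [Fintype ι] [Fintype κ] (p : ι → κ → ℝ) : ℝ :=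
  shannon (fun i => ∑ j, p i j) + shannon (fun j => ∑ i, p i j)
    - shannon (fun x : ι × κ => p x.1 x.2)

/-- A POVM: positive operators summing to the identity. -/
def IsPOVM {n ι : Type} [Fintype n] [DecidableEq n] [Fintype ι]
    (M : ι → Matrix n n ℂ) : Prop :=
  (∀ i, (M i).PosSemidef) ∧ ∑ i, M i = 1

/-- An orthonormal family of vectors. -/
def OrthonormalFam {ι n : Type} [Fintype n] [DecidableEq ι] (v : ι → n → ℂ) : Prop :=
  ∀ i i', ∑ a, star (v i a) * v i' a = if i = i' then 1 else 0

/-- The rank-one projector |v⟩⟨v|. -/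
def proj {n : Type} (v : n → ℂ) : Matrix n n ℂ := fun a a' => v a * star (v a')

/-- Probability distribution induced by a pair of local POVMs on a bipartite state. -/
def locProb {A B ι κ : Type} [Fintype A] [Fintype B] [Fintype ι] [Fintype κ]
    (M : ι → Matrix A A ℂ) (N : κ → Matrix B B ℂ)
    (ρ : Matrix (A × B) (A × B) ℂ) : ι → κ → ℝ :=
  fun i j => (((M i ⊗ₖ N j) * ρ).trace).re

/-- The classical–classical mutual information I_CC: the supremum of the classical
mutual information extractable by local POVMs. -/
def Icc {A B : Type} [Fintype A] [Fintype B] [DecidableEq A] [DecidableEq B]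
    (ρ : Matrix (A × B) (A × B) ℂ) : ℝ :=
  sSup {x | ∃ (k l : ℕ) (M : Fin k → Matrix A A ℂ) (N : Fin l → Matrix B B ℂ),
    IsPOVM M ∧ IsPOVM N ∧ x = cMI (locProb M N ρ)}

/-- The state obtained by applying the measurement map of the POVM `M` on the A part. -/
def cqMeasured {A B : Type} [Fintype A] [Fintype B] {k : ℕ}
    (M : Fin k → Matrix A A ℂ) (ρ : Matrix (A × B) (A × B) ℂ) :
    Matrix (Fin k × B) (Fin k × B) ℂ :=
  fun p q => if p.1 = q.1 then ∑ a, ∑ a', M p.1 a a' * ρ (a', p.2) (a, q.2) else 0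

/-- The classical–quantum mutual information I_CQ: supremum of mutual information
after a measurement map on A. -/
def Icq {A B : Type} [Fintype A] [Fintype B] [DecidableEq A] [DecidableEq B]
    (ρ : Matrix (A × B) (A × B) ℂ) : ℝ :=
  sSup {x | ∃ (k : ℕ) (M : Fin k → Matrix A A ℂ),
    IsPOVM M ∧ x = mutualInfo (cqMeasured M ρ)}

/-- Classical–classical (strictly classically correlated) states: diagonal in a
product orthonormal basis, with a joint probability distribution on the diagonal. -/
def IsCC {A B : Type} [Fintype A] [Fintype B] [DecidableEq A] [DecidableEq B]
    (ρ : Matrix (A × B) (A × B) ℂ) : Prop :=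
  ∃ (U : Matrix A A ℂ) (V : Matrix B B ℂ) (p : A × B → ℝ),
    U ∈ Matrix.unitaryGroup A ℂ ∧ V ∈ Matrix.unitaryGroup B ℂ ∧
    (∀ x, 0 ≤ p x) ∧ ∑ x, p x = 1 ∧
    ρ = (U ⊗ₖ V) * Matrix.diagonal (fun x => (p x : ℂ)) * star (U ⊗ₖ V)

/-- Marginal of a 4-partite state on the first copy AB (tracing out A'B'). -/
def marginal1 {A A' B B' : Type} [Fintype A] [Fintype A'] [Fintype B] [Fintype B']
    (σ : Matrix ((A × A') × (B × B')) ((A × A') × (B × B')) ℂ) :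
    Matrix (A × B) (A × B) ℂ :=
  fun p q => ∑ x : A', ∑ y : B', σ ((p.1, x), (p.2, y)) ((q.1, x), (q.2, y))

/-- Marginal of a 4-partite state on the second copy A'B' (tracing out AB). -/
def marginal2 {A A' B B' : Type} [Fintype A] [Fintype A'] [Fintype B] [Fintype B']
    (σ : Matrix ((A × A') × (B × B')) ((A × A') × (B × B')) ℂ) :
    Matrix (A' × B') (A' × B') ℂ :=
  fun p q => ∑ a : A, ∑ b : B, σ ((a, p.1), (b, p.2)) ((a, q.1), (b, q.2))

/-- A bipartite state is locally broadcastable if local channels can produce a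
broadcast state, i.e. a state on two copies whose both copy-marginals equal ρ. -/
def LocallyBroadcastable {A B : Type} [Fintype A] [Fintype B] [DecidableEq A] [DecidableEq B]
    (ρ : Matrix (A × B) (A × B) ℂ) : Prop :=
  ∃ (ΘA : Matrix A A ℂ →ₗ[ℂ] Matrix (A × A) (A × A) ℂ)
    (ΘB : Matrix B B ℂ →ₗ[ℂ] Matrix (B × B) (B × B) ℂ),
    IsCPTP ΘA ∧ IsCPTP ΘB ∧
    marginal1 (tensorMap ΘA ΘB ρ) = ρ ∧ marginal2 (tensorMap ΘA ΘB ρ) = ρ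

/-- Adjoint (dual) of a linear map on matrices w.r.t. the Hilbert–Schmidt inner product. -/
def adjMap {A A' : Type} [Fintype A] [Fintype A'] [DecidableEq A]
    (Φ : Matrix A A ℂ →ₗ[ℂ] Matrix A' A' ℂ) :
    Matrix A' A' ℂ →ₗ[ℂ] Matrix A A ℂ where
  toFun Y := fun a a' => ((Φ (Matrix.single a a' 1))ᴴ * Y).trace
  map_add' Y Z := by
    funext a a'
    show _ = (_ : ℂ) + _
    simp [Matrix.mul_add, Matrix.trace_add, Matrix.add_apply]
  map_smul' c Y := by
    funext a a'
    show _ = c * (_ : ℂ)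
    simp [Matrix.mul_smul, Matrix.trace_smul, Matrix.smul_apply]

/-- The Petz recovery map of the channel Φ with respect to the state σ,
Λ*(X) = σ^{1/2} Φ†( Φ(σ)^{-1/2} X Φ(σ)^{-1/2} ) σ^{1/2}. -/
def petz {A A' : Type} [Fintype A] [Fintype A'] [DecidableEq A] [DecidableEq A']
    (Φ : Matrix A A ℂ →ₗ[ℂ] Matrix A' A' ℂ) (σ : Matrix A A ℂ) :
    Matrix A' A' ℂ →ₗ[ℂ] Matrix A A ℂ where
  toFun X := msqrt σ * adjMap Φ (minvsqrt (Φ σ) * X * minvsqrt (Φ σ)) * msqrt σ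
  map_add' X Y := by
    simp [Matrix.mul_add, Matrix.add_mul, map_add]
  map_smul' c X := by
    simp [Matrix.mul_smul, Matrix.smul_mul, _root_.map_smul]

/-- Assemble |i⟩⟨i|_A ⊗ |j⟩⟨j|_B ⊗ R_{A'B'} (as matrices P on A, Q on B) into a state on
the bipartite cut (A A') : (B B'). -/
def assemble {A A' B B' : Type} (P : Matrix A A ℂ) (Q : Matrix B B ℂ)
    (R : Matrix (A' × B') (A' × B') ℂ) :
    Matrix ((A × A') × (B × B')) ((A × A') × (B × B')) ℂ :=
  fun p q => P p.1.1 q.1.1 * Q p.2.1 q.2.1 * R (p.1.2, p.2.2) (q.1.2, q.2.2)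

/-- Separable bipartite states: convex combinations of product states. -/
def IsSepState {A B : Type} [Fintype A] [Fintype B] [DecidableEq A] [DecidableEq B]
    (ρ : Matrix (A × B) (A × B) ℂ) : Prop :=
  ∃ (k : ℕ) (q : Fin k → ℝ) (α : Fin k → Matrix A A ℂ) (β : Fin k → Matrix B B ℂ),
    (∀ i, 0 ≤ q i) ∧ ∑ i, q i = 1 ∧ (∀ i, IsDensity (α i)) ∧ (∀ i, IsDensity (β i)) ∧
    ρ = ∑ i, (q i : ℂ) • (α i ⊗ₖ β i)



/-! ### Auxiliary lemmas for STATEMENT 5 -/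

private lemma simuldiag_aux {ι K : Type} {E : Type} [NormedAddCommGroup E]
    [InnerProductSpace ℂ E] [FiniteDimensional ℂ E] [Fintype K] [DecidableEq K]
    {m : ℕ} (hm : Module.finrank ℂ E = m)
    (T : ι → Module.End ℂ E) (hsym : ∀ i, (T i).IsSymmetric)
    (g : K → ι → ℂ) (hg : Function.Injective g)
    (htop : ⨆ k : K, ⨅ j, Module.End.eigenspace (T j) (g k j) = ⊤) :
    ∃ b : OrthonormalBasis (Fin m) ℂ E,
      ∀ a, ∃ k, ∀ i, T i (b a) = g k i • b a := by
  have hfamJ : OrthogonalFamily ℂ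
      (fun k : K => ↥(⨅ j, Module.End.eigenspace (T j) (g k j)))
      (fun k => (⨅ j, Module.End.eigenspace (T j) (g k j)).subtypeₗᵢ) :=
    (LinearMap.IsSymmetric.orthogonalFamily_iInf_eigenspaces hsym).comp hg
  have hVJ : DirectSum.IsInternal
      (fun k : K => (⨅ j, Module.End.eigenspace (T j) (g k j))) := by
    rw [hfamJ.isInternal_iff, htop, Submodule.top_orthogonal_eq_bot]
  refine ⟨hVJ.subordinateOrthonormalBasis hm hfamJ,
    fun a => ⟨hVJ.subordinateOrthonormalBasisIndex hm a hfamJ, fun i => ?_⟩⟩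
  have h := hVJ.subordinateOrthonormalBasis_subordinate hm a hfamJ
  exact Module.End.mem_eigenspace_iff.mp ((Submodule.mem_iInf _).mp h i)

private lemma simuldiag {ι n : Type} [Fintype ι] [Fintype n] [DecidableEq n]
    (σ : ι → Matrix n n ℂ) (hherm : ∀ i, (σ i).IsHermitian)
    (hcomm : ∀ i i', σ i * σ i' = σ i' * σ i) :
    ∃ U : Matrix n n ℂ, U ∈ Matrix.unitaryGroup n ℂ ∧ ∃ q : ι → n → ℝ,
      ∀ i, σ i = U * Matrix.diagonal (fun a => (q i a : ℂ)) * star U := by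
  classical
  set T : ι → Module.End ℂ (EuclideanSpace ℂ n) := fun i => Matrix.toEuclideanLin (σ i) with hTdef
  have hsym : ∀ i, (T i).IsSymmetric := fun i => Matrix.isHermitian_iff_isSymmetric.mp (hherm i)
  have hmulT : ∀ A B : Matrix n n ℂ,
      (Matrix.toEuclideanLin A) * (Matrix.toEuclideanLin B) = Matrix.toEuclideanLin (A * B) := by
    intro A B
    apply LinearMap.ext
    intro v
    simp [Matrix.toEuclideanLin_apply, Matrix.mulVec_mulVec]
  have hC : Pairwise (Function.onFun Commute T) := by
    intro i i' _
    show T i * T i' = T i' * T i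
    simp only [hTdef, hmulT, hcomm i i']
  have hg : Function.Injective
      (fun (χ : ∀ i, Module.End.Eigenvalues (T i)) (i : ι) => (χ i : ℂ)) := by
    intro χ χ' h
    funext i
    exact Subtype.ext (congrFun h i)
  have htop : ⨆ χ : ∀ i, Module.End.Eigenvalues (T i),
      ⨅ j, Module.End.eigenspace (T j) ((χ j : ℂ)) = ⊤ := by
    rw [eq_top_iff, ← LinearMap.IsSymmetric.iSup_iInf_eq_top_of_commute hsym hC]
    apply iSup_le
    intro γ
    by_cases h : ∀ i, (T i).HasEigenvalue (γ i)
    · exact le_iSup_of_le (fun i => ⟨γ i, h i⟩) (le_refl _)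
    · push_neg at h
      obtain ⟨i₀, hi₀⟩ := h
      have hbot : Module.End.eigenspace (T i₀) (γ i₀) = ⊥ := by
        by_contra hne
        exact hi₀ (Module.End.hasEigenvalue_iff.mpr hne)
      exact le_trans (le_trans (iInf_le _ i₀) (le_of_eq hbot)) bot_le
  obtain ⟨b, hb⟩ := simuldiag_aux (finrank_euclideanSpace (𝕜 := ℂ) (ι := n)) T hsym _ hg htop
  choose κ hκ using hb
  set e : n ≃ Fin (Fintype.card n) := Fintype.equivFin n with hedef
  set U : Matrix n n ℂ := fun x a => b (e a) x with hUdef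
  have hUmem : U ∈ Matrix.unitaryGroup n ℂ := by
    rw [Matrix.mem_unitaryGroup_iff']
    ext a a'
    have horth := b.orthonormal
    rw [orthonormal_iff_ite] at horth
    have hoo := horth (e a) (e a')
    simp only [PiLp.inner_apply, RCLike.inner_apply] at hoo
    rw [Matrix.mul_apply]
    simp only [Matrix.star_apply, Matrix.one_apply, hUdef, RCLike.star_def]
    convert hoo using 1
    · exact Finset.sum_congr rfl fun x _ => mul_comm _ _
    · simp [Equiv.apply_eq_iff_eq]
  have hreal : ∀ a i, (((κ (e a) i : ℂ).re : ℂ)) = (κ (e a) i : ℂ) := by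
    intro a i
    rw [← Complex.conj_eq_iff_re]
    refine (hsym i).conj_eigenvalue_eq_self ?_
    refine Module.End.hasEigenvalue_of_hasEigenvector (x := b (e a))
      ⟨Module.End.mem_eigenspace_iff.mpr (hκ (e a) i), ?_⟩
    simpa using b.toBasis.ne_zero (e a)
  refine ⟨U, hUmem, fun i a => (κ (e a) i : ℂ).re, fun i => ?_⟩
  have hcol : ∀ a : n, σ i *ᵥ (fun x => U x a) = (κ (e a) i : ℂ) • (fun x => U x a) := by
    intro a
    have h2 : Matrix.toEuclideanLin (σ i) (b (e a)) = (κ (e a) i : ℂ) • b (e a) := hκ (e a) i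
    rw [Matrix.toEuclideanLin_apply] at h2
    have h3 := congrArg (WithLp.equiv 2 (n → ℂ)) h2
    simpa [hUdef] using h3
  have hσU : σ i * U = U * Matrix.diagonal (fun a => (((κ (e a) i : ℂ).re : ℂ))) := by
    ext x a
    have hthis := congrFun (hcol a) x
    simp only [Matrix.mulVec, dotProduct, Pi.smul_apply, smul_eq_mul] at hthis
    rw [Matrix.mul_apply, Matrix.mul_diagonal, hreal a i, mul_comm, ← hthis]
  have hUU : U * star U = 1 := Matrix.mem_unitaryGroup_iff.mp hUmem
  calc σ i = σ i * (U * star U) := by rw [hUU, mul_one]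
    _ = (σ i * U) * star U := by rw [mul_assoc]
    _ = U * Matrix.diagonal (fun a => (((κ (e a) i : ℂ).re : ℂ))) * star U := by rw [hσU]

private lemma eig_sum {n : Type} [Fintype n] [DecidableEq n] {U : Matrix n n ℂ}
    (hU : U ∈ Matrix.unitaryGroup n ℂ) (d : n → ℝ) {ρ : Matrix n n ℂ}
    (hρd : ρ = U * Matrix.diagonal (fun a => (d a : ℂ)) * star U)
    (hρ : ρ.IsHermitian) (f : ℝ → ℝ) :
    ∑ i, f (hρ.eigenvalues i) = ∑ a, f (d a) := by
  set V : Matrix n n ℂ := (hρ.eigenvectorUnitary : Matrix n n ℂ) with hVdef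
  have hVmem : V ∈ Matrix.unitaryGroup n ℂ := hρ.eigenvectorUnitary.2
  have hV1 : star V * V = 1 := Matrix.mem_unitaryGroup_iff'.mp hVmem
  have hV2 : V * star V = 1 := Matrix.mem_unitaryGroup_iff.mp hVmem
  have hU1 : star U * U = 1 := Matrix.mem_unitaryGroup_iff'.mp hU
  have hU2 : U * star U = 1 := Matrix.mem_unitaryGroup_iff.mp hU
  have hspec : ρ = V * Matrix.diagonal (fun i => (hρ.eigenvalues i : ℂ)) * star V := by
    exact hρ.spectral_theorem
  set W : Matrix n n ℂ := star V * U with hWdef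
  have hsW : star W = star U * V := by rw [hWdef, StarMul.star_mul, star_star]
  have hW2 : W * star W = 1 := by
    rw [hsW, hWdef, mul_assoc, ← mul_assoc U, hU2, one_mul, hV1]
  have hW1 : star W * W = 1 := by
    rw [hsW, hWdef, mul_assoc, ← mul_assoc V, hV2, one_mul, hU1]
  have hkey : Matrix.diagonal (fun i => (hρ.eigenvalues i : ℂ)) * W
      = W * Matrix.diagonal (fun a => (d a : ℂ)) := by
    have h1 : star V * ρ * U = Matrix.diagonal (fun i => (hρ.eigenvalues i : ℂ)) * W := by
      calc star V * ρ * U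
          = star V * (V * Matrix.diagonal (fun i => (hρ.eigenvalues i : ℂ)) * star V) * U := by
            rw [← hspec]
        _ = Matrix.diagonal (fun i => (hρ.eigenvalues i : ℂ)) * W := by
            simp only [← mul_assoc]
            rw [hV1, one_mul, mul_assoc, ← hWdef]
    have h2 : star V * ρ * U = W * Matrix.diagonal (fun a => (d a : ℂ)) := by
      rw [hρd]
      simp only [← mul_assoc]
      rw [mul_assoc _ (star U) U, hU1, mul_one, ← hWdef]
    rw [← h1, h2]
  have hfkey : Matrix.diagonal (fun i => (f (hρ.eigenvalues i) : ℂ)) * W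
      = W * Matrix.diagonal (fun a => (f (d a) : ℂ)) := by
    ext i j
    rw [Matrix.diagonal_mul, Matrix.mul_diagonal]
    by_cases hW0 : W i j = 0
    · simp [hW0]
    · have hij : (hρ.eigenvalues i : ℂ) * W i j = W i j * (d j : ℂ) := by
        have h' := congrFun (congrFun hkey i) j
        rwa [Matrix.diagonal_mul, Matrix.mul_diagonal] at h'
      have hva : (hρ.eigenvalues i : ℂ) = (d j : ℂ) := by
        have h2 : (hρ.eigenvalues i : ℂ) * W i j = (d j : ℂ) * W i j := by
          rw [hij]; ring
        exact mul_right_cancel₀ hW0 h2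
      have hva' : hρ.eigenvalues i = d j := by exact_mod_cast hva
      rw [hva', mul_comm]
  have htr : ∑ i, (f (hρ.eigenvalues i) : ℂ) = ∑ a, (f (d a) : ℂ) := by
    have e1 : Matrix.diagonal (fun i => (f (hρ.eigenvalues i) : ℂ))
        = Matrix.diagonal (fun i => (f (hρ.eigenvalues i) : ℂ)) * W * star W := by
      rw [mul_assoc, hW2, mul_one]
    calc ∑ i, (f (hρ.eigenvalues i) : ℂ)
        = (Matrix.diagonal (fun i => (f (hρ.eigenvalues i) : ℂ))).trace := by
          rw [Matrix.trace_diagonal]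
      _ = (Matrix.diagonal (fun i => (f (hρ.eigenvalues i) : ℂ)) * W * star W).trace := by
          rw [← e1]
      _ = (W * Matrix.diagonal (fun a => (f (d a) : ℂ)) * star W).trace := by rw [hfkey]
      _ = (star W * W * Matrix.diagonal (fun a => (f (d a) : ℂ))).trace := by
          rw [Matrix.trace_mul_cycle]
      _ = ∑ a, (f (d a) : ℂ) := by rw [hW1, one_mul, Matrix.trace_diagonal]
  exact_mod_cast htr

private lemma herm_rep {n : Type} [Fintype n] [DecidableEq n] (U : Matrix n n ℂ) (d : n → ℝ) :
    (U * Matrix.diagonal (fun a => (d a : ℂ)) * star U).IsHermitian := by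
  have hsa : IsSelfAdjoint (fun a => (d a : ℂ)) := by
    funext a
    simp [Pi.star_apply, Complex.conj_ofReal]
  have hD : (Matrix.diagonal (fun a => (d a : ℂ))).IsHermitian :=
    Matrix.isHermitian_diagonal_of_self_adjoint _ hsa
  rw [Matrix.star_eq_conjTranspose]
  exact Matrix.isHermitian_mul_mul_conjTranspose U hD

private lemma vN_rep {n : Type} [Fintype n] [DecidableEq n] {U : Matrix n n ℂ}
    (hU : U ∈ Matrix.unitaryGroup n ℂ) (d : n → ℝ) {ρ : Matrix n n ℂ}
    (hρd : ρ = U * Matrix.diagonal (fun a => (d a : ℂ)) * star U)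
    (hρ : ρ.IsHermitian) :
    vN ρ = -∑ a, d a * Real.log (d a) := by
  rw [vN, dif_pos hρ]
  exact congrArg Neg.neg (eig_sum hU d hρd hρ (fun x => x * Real.log x))

/-- If the states of an ensemble pairwise commute, some POVM (a projective
measurement in a common eigenbasis) attains the Holevo quantity. -/
theorem holevo_attained_of_commute {ι n : Type} [Fintype ι] [Fintype n] [DecidableEq n]
    (p : ι → ℝ) (hp : ∀ i, 0 < p i) (hp1 : ∑ i, p i = 1)
    (σ : ι → Matrix n n ℂ) (hσ : ∀ i, IsDensity (σ i))
    (hcomm : ∀ i i', σ i * σ i' = σ i' * σ i) :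
    ∃ (k : ℕ) (N : Fin k → Matrix n n ℂ), IsPOVM N ∧
      cMI (fun i j => p i * ((N j * σ i).trace).re)
        = vN (∑ i, (p i : ℂ) • σ i) - ∑ i, p i * vN (σ i) := by
  classical
  obtain ⟨U, hU, q, hq⟩ := simuldiag σ (fun i => (hσ i).1.1) hcomm
  have hU1 : star U * U = 1 := Matrix.mem_unitaryGroup_iff'.mp hU
  have hU2 : U * star U = 1 := Matrix.mem_unitaryGroup_iff.mp hU
  set e : n ≃ Fin (Fintype.card n) := Fintype.equivFin n with hedef
  set N : Fin (Fintype.card n) → Matrix n n ℂ :=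
    fun j => U * Matrix.single (e.symm j) (e.symm j) 1 * star U with hNdef
  have hstd : ∀ a : n, Matrix.single a a (1 : ℂ) = Matrix.diagonal (Pi.single a 1) := by
    intro a
    ext x y
    simp only [Matrix.single, Matrix.of_apply, Matrix.diagonal_apply, Pi.single_apply]
    by_cases h1 : x = a <;> by_cases h2 : y = a <;> by_cases h3 : x = y <;>
      simp_all [eq_comm]
  have key : ∀ A B : Matrix n n ℂ, (U * A * star U) * (U * B * star U) = U * (A * B) * star U := by
    intro A B
    calc (U * A * star U) * (U * B * star U)
        = U * A * ((star U * U) * (B * star U)) := by simp only [Matrix.mul_assoc]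
      _ = U * (A * B) * star U := by
          rw [hU1, one_mul]
          simp only [Matrix.mul_assoc]
  have trconj : ∀ X : Matrix n n ℂ, (U * X * star U).trace = X.trace := by
    intro X
    rw [Matrix.trace_mul_cycle, hU1, one_mul]
  have hPSD : ∀ j, (N j).PosSemidef := by
    intro j
    have h1 : (Matrix.single (e.symm j) (e.symm j) (1 : ℂ)).PosSemidef := by
      rw [hstd]
      refine Matrix.posSemidef_diagonal_iff.mpr fun a => ?_
      by_cases h : a = e.symm j <;> simp [Pi.single_apply, h]
    show (U * Matrix.single (e.symm j) (e.symm j) 1 * star U).PosSemidef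
    simpa [Matrix.star_eq_conjTranspose] using h1.mul_mul_conjTranspose_same U
  have hsum : ∑ j, N j = 1 := by
    have h1 : ∑ j, N j
        = U * (∑ j, Matrix.single (e.symm j) (e.symm j) (1 : ℂ)) * star U := by
      rw [Matrix.mul_sum, Matrix.sum_mul]
    have h2 : ∑ j, Matrix.single (e.symm j) (e.symm j) (1 : ℂ)
        = ∑ a : n, Matrix.single a a (1 : ℂ) :=
      Equiv.sum_comp e.symm (fun a => Matrix.single a a (1 : ℂ))
    have h3 : ∑ a : n, Matrix.single a a (1 : ℂ) = 1 := by
      ext x y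
      by_cases h : x = y
      · subst h
        simp [hstd, Matrix.sum_apply, Matrix.diagonal_apply, Pi.single_apply, Matrix.one_apply]
      · simp [hstd, Matrix.sum_apply, Matrix.diagonal_apply, Pi.single_apply, Matrix.one_apply, h]
    rw [h1, h2, h3, mul_one, hU2]
  have htr : ∀ (i : ι) (j : Fin (Fintype.card n)),
      (N j * σ i).trace = ((q i (e.symm j) : ℝ) : ℂ) := by
    intro i j
    rw [hq i, hNdef]
    rw [key]
    rw [trconj]
    rw [hstd]
    rw [Matrix.diagonal_mul_diagonal, Matrix.trace_diagonal]
    have : ∀ a : n, (Pi.single (e.symm j) 1 : n → ℂ) a * (q i a : ℂ)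
        = if a = e.symm j then ((q i (e.symm j) : ℝ) : ℂ) else 0 := by
      intro a
      by_cases h : a = e.symm j <;> simp [Pi.single_apply, h]
    rw [Finset.sum_congr rfl fun a _ => this a, Finset.sum_ite_eq' Finset.univ (e.symm j)]
    simp
  have htr' : ∀ (i : ι) (j : Fin (Fintype.card n)),
      ((N j * σ i).trace).re = q i (e.symm j) := by
    intro i j
    rw [htr i j, Complex.ofReal_re]
  have hq1 : ∀ i, ∑ a, q i a = 1 := by
    intro i
    have ht := (hσ i).2
    rw [hq i, trconj, Matrix.trace_diagonal] at ht
    exact_mod_cast ht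
  have hbar : ∑ i, (p i : ℂ) • σ i
      = U * Matrix.diagonal (fun a => ((∑ i, p i * q i a : ℝ) : ℂ)) * star U := by
    have h1 : ∀ i, (p i : ℂ) • σ i
        = U * ((p i : ℂ) • Matrix.diagonal (fun a => (q i a : ℂ))) * star U := by
      intro i
      rw [hq i, Matrix.mul_smul, Matrix.smul_mul]
    rw [Finset.sum_congr rfl fun i _ => h1 i, ← Matrix.sum_mul, ← Matrix.mul_sum]
    have h2 : ∑ i, (p i : ℂ) • Matrix.diagonal (fun a => (q i a : ℂ))
        = Matrix.diagonal (fun a => ((∑ i, p i * q i a : ℝ) : ℂ)) := by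
      ext x y
      by_cases hxy : x = y
      · subst hxy
        simp only [Matrix.sum_apply, Matrix.smul_apply, Matrix.diagonal_apply_eq, smul_eq_mul]
        push_cast
        rfl
      · simp [Matrix.sum_apply, Matrix.diagonal_apply_ne _ hxy]
    rw [h2]
  have hherm : ∀ i, (σ i).IsHermitian := fun i => (hσ i).1.1
  have hbarherm : (∑ i, (p i : ℂ) • σ i).IsHermitian := by
    rw [hbar]
    exact herm_rep U _
  have hvNσ : ∀ i, vN (σ i) = -∑ a, q i a * Real.log (q i a) :=
    fun i => vN_rep hU (q i) (hq i) (hherm i)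
  have hvNbar : vN (∑ i, (p i : ℂ) • σ i)
      = -∑ a, (∑ i, p i * q i a) * Real.log (∑ i, p i * q i a) :=
    vN_rep hU _ hbar hbarherm
  refine ⟨Fintype.card n, N, ⟨hPSD, hsum⟩, ?_⟩
  have hfun : (fun i j => p i * ((N j * σ i).trace).re)
      = fun i j => p i * q i (e.symm j) := by
    funext i j
    rw [htr' i j]
  rw [hfun, hvNbar, cMI, shannon, shannon, shannon]
  have hm1 : ∀ i, ∑ j, p i * q i (e.symm j) = p i := by
    intro i
    rw [← Finset.mul_sum, Equiv.sum_comp e.symm (q i), hq1 i, mul_one]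
  have E1 : ∑ i, (∑ j, p i * q i (e.symm j)) * Real.log (∑ j, p i * q i (e.symm j))
      = ∑ i, p i * Real.log (p i) :=
    Finset.sum_congr rfl fun i _ => by rw [hm1 i]
  have E2 : ∑ j, (∑ i, p i * q i (e.symm j)) * Real.log (∑ i, p i * q i (e.symm j))
      = ∑ a, (∑ i, p i * q i a) * Real.log (∑ i, p i * q i a) :=
    Equiv.sum_comp e.symm (fun a => (∑ i, p i * q i a) * Real.log (∑ i, p i * q i a))
  have E3 : ∑ x : ι × Fin (Fintype.card n),
      p x.1 * q x.1 (e.symm x.2) * Real.log (p x.1 * q x.1 (e.symm x.2))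
      = ∑ i, ∑ a, p i * q i a * Real.log (p i * q i a) := by
    rw [Fintype.sum_prod_type]
    refine Finset.sum_congr rfl fun i _ => ?_
    exact Equiv.sum_comp e.symm (fun a => p i * q i a * Real.log (p i * q i a))
  have E4 : ∑ i, p i * vN (σ i) = ∑ i, -(p i * ∑ a, q i a * Real.log (q i a)) :=
    Finset.sum_congr rfl fun i _ => by rw [hvNσ i, mul_neg]
  rw [E1, E2, E3, E4]
  have hJ : ∑ i, ∑ a, p i * q i a * Real.log (p i * q i a)
      = (∑ i, p i * Real.log (p i)) + ∑ i, p i * ∑ a, q i a * Real.log (q i a) := by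
    rw [← Finset.sum_add_distrib]
    refine Finset.sum_congr rfl fun i _ => ?_
    have hpa : ∀ a, p i * q i a * Real.log (p i * q i a)
        = q i a * (p i * Real.log (p i)) + p i * (q i a * Real.log (q i a)) := by
      intro a
      by_cases hqa : q i a = 0
      · simp [hqa]
      · rw [Real.log_mul (ne_of_gt (hp i)) hqa]
        ring
    rw [Finset.sum_congr rfl fun a _ => hpa a, Finset.sum_add_distrib, ← Finset.sum_mul,
      hq1 i, one_mul, ← Finset.mul_sum]
  rw [hJ, Finset.sum_neg_distrib]
  ring
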